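/- Let p be a prime, H a cyclic group of order p, and M an 𝔽_p[H]-module. Then M contains a maximal free 𝔽_p[H]-submodule Y, and M decomposes as M = Y ⊕ R for some 𝔽_p[H]-submodule R. -/

import Mathlib

/-- The group algebra `𝔽_p[H]` for `H` the cyclic group of order `p`, generated by `σ`. -/
abbrev Sp (p : ℕ) : Type := MonoidAlgebra (ZMod p) (Multiplicative (ZMod p))

/-- The generator `σ` of the cyclic group `H`, as an element of the group algebra. -/
noncomputable def sigma (p : ℕ) : Sp p :=
  MonoidAlgebra.of (ZMod p) (Multiplicative (ZMod p)) (Multiplicative.ofAdd 1)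

namespace Stmt5Aux

open Polynomial

variable (p : ℕ) [Fact p.Prime]

noncomputable abbrev Rp : Type := AdjoinRoot (X ^ p : (ZMod p)[X])

noncomputable def tt : Rp p := AdjoinRoot.mk _ X

lemma tt_pow_eq (k : ℕ) : tt p ^ k = AdjoinRoot.mk _ (X ^ k) := by
  rw [tt, map_pow]

lemma tt_pow : tt p ^ p = 0 := by
  rw [tt_pow_eq, AdjoinRoot.mk_self]

lemma Rp.K2 (k : ℕ) (hk : k ≤ p) (a : Rp p) (h : tt p ^ (p - k) * a = 0) :
    ∃ b, a = tt p ^ k * b := by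
  obtain ⟨g, rfl⟩ := AdjoinRoot.mk_surjective a
  rw [tt_pow_eq, ← map_mul, AdjoinRoot.mk_eq_zero] at h
  have hdvd : X ^ k ∣ g := by
    have h2 : X ^ (p - k) * X ^ k ∣ X ^ (p - k) * g := by
      rwa [← pow_add, Nat.sub_add_cancel hk]
    exact (mul_dvd_mul_iff_left (pow_ne_zero _ (X_ne_zero (R := ZMod p)))).mp h2
  obtain ⟨h3, rfl⟩ := hdvd
  exact ⟨AdjoinRoot.mk _ h3, by rw [tt_pow_eq, ← map_mul]⟩

lemma Rp.K4 (a : Rp p) (ha : a ≠ 0) :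
    ∃ k < p, ∃ u : Rp p, IsUnit u ∧ a = tt p ^ k * u := by
  obtain ⟨g, rfl⟩ := AdjoinRoot.mk_surjective a
  have hg : ¬ (X : (ZMod p)[X]) ^ p ∣ g := by
    rw [← AdjoinRoot.mk_eq_zero]; exact ha
  have hg0 : g ≠ 0 := by rintro rfl; exact hg (dvd_zero _)
  have h1 : (X : (ZMod p)[X]) ^ (g.rootMultiplicity 0) ∣ g := by
    simpa using Polynomial.pow_rootMultiplicity_dvd g 0
  obtain ⟨h, hgh⟩ := h1
  have hXh : ¬ (X : (ZMod p)[X]) ∣ h := by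
    intro ⟨c, hc⟩
    have hd : (X : (ZMod p)[X]) ^ (g.rootMultiplicity 0 + 1) ∣ g := by
      refine ⟨c, ?_⟩
      nth_rewrite 1 [hgh]
      rw [hc]; ring
    have := (Polynomial.le_rootMultiplicity_iff (a := (0:ZMod p)) hg0).mpr (by simpa using hd)
    omega
  have hkp : g.rootMultiplicity 0 < p := by
    by_contra hle
    exact hg (hgh ▸ dvd_mul_of_dvd_left (pow_dvd_pow _ (by omega)) _)
  refine ⟨g.rootMultiplicity 0, hkp, AdjoinRoot.mk _ h, ?_, by rw [tt_pow_eq, ← map_mul, ← hgh]⟩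
  have hcop : IsCoprime (X ^ p : (ZMod p)[X]) h :=
    ((Polynomial.irreducible_X.coprime_iff_not_dvd).mpr hXh).pow_left
  obtain ⟨c, d, hcd⟩ := hcop
  have h5 : AdjoinRoot.mk (X^p : (ZMod p)[X]) h * AdjoinRoot.mk _ d = 1 := by
    have h6 : AdjoinRoot.mk (X^p : (ZMod p)[X]) (c * X ^ p + d * h) = 1 := by
      rw [hcd, map_one]
    simpa [map_add, map_mul, AdjoinRoot.mk_self, mul_comm] using h6
  exact IsUnit.of_mul_eq_one _ h5

noncomputable def piR : Rp p →ₐ[ZMod p] ZMod p :=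
  AdjoinRoot.liftAlgHom _ (Algebra.ofId _ _) 0 (by simp [Fact.out (p := p.Prime) |>.ne_zero])

lemma piR_mk (g : (ZMod p)[X]) : piR p (AdjoinRoot.mk _ g) = g.eval 0 := by
  rw [piR, AdjoinRoot.liftAlgHom_mk]; simp [aeval_def, eval]

lemma Rp.K6 (b : Rp p) : tt p ^ (p-1) * b = piR p b • tt p ^ (p-1) := by
  obtain ⟨g, rfl⟩ := AdjoinRoot.mk_surjective b
  rw [piR_mk]
  have hd : (X : (ZMod p)[X]) ∣ (g - C (g.eval 0)) := by
    rw [X_dvd_iff]; simp [coeff_zero_eq_eval_zero]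
  obtain ⟨c, hc⟩ := hd
  have hp1 : p - 1 + 1 = p := by
    have := (Fact.out (p := p.Prime)).pos; omega
  have hp2 : (X : (ZMod p)[X]) ^ p = X ^ (p-1) * X := by rw [← pow_succ, hp1]
  rw [tt_pow_eq, AdjoinRoot.smul_mk, ← map_mul, ← sub_eq_zero, ← map_sub,
    AdjoinRoot.mk_eq_zero]
  refine ⟨c, ?_⟩
  rw [smul_eq_C_mul, hp2]
  linear_combination (X : (ZMod p)[X]) ^ (p-1) * hc

lemma Rp.K7 (b : Rp p) (h : piR p b = 0) : ∃ c, b = tt p * c := by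
  obtain ⟨g, rfl⟩ := AdjoinRoot.mk_surjective b
  rw [piR_mk] at h
  have : (X : (ZMod p)[X]) ∣ g := by rw [X_dvd_iff, coeff_zero_eq_eval_zero]; exact h
  obtain ⟨c, rfl⟩ := this
  exact ⟨AdjoinRoot.mk _ c, by rw [tt, ← map_mul]⟩

noncomputable def eps : Sp p := sigma p - 1

lemma charSp : CharP (Sp p) p := by
  have h : Function.Injective (algebraMap (ZMod p) (Sp p)) :=
    (algebraMap (ZMod p) (Sp p)).injective
  exact charP_of_injective_algebraMap h p

lemma sigma_pow_p : sigma p ^ p = 1 := by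
  haveI : NeZero p := ⟨(Fact.out (p := p.Prime)).ne_zero⟩
  rw [sigma, ← map_pow]
  have : (Multiplicative.ofAdd (1 : ZMod p)) ^ p = 1 := by
    rw [← ofAdd_nsmul]
    simp [nsmul_eq_mul]
  rw [this, map_one]

lemma eps_pow_p : eps p ^ p = 0 := by
  haveI := charSp p
  rw [eps, sub_pow_char, sigma_pow_p, one_pow, sub_self]

lemma sp_finrank : Module.finrank (ZMod p) (Sp p) = p := by
  have b : Module.Basis (Multiplicative (ZMod p)) (ZMod p) (Sp p) := MonoidAlgebra.basis _ _
  haveI : NeZero p := ⟨(Fact.out (p := p.Prime)).ne_zero⟩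
  rw [Module.finrank_eq_card_basis b]
  simp [ZMod.card]

noncomputable def phi : Rp p →ₐ[ZMod p] Sp p :=
  AdjoinRoot.liftAlgHom _ (Algebra.ofId _ _) (eps p) (by rw [eval₂_X_pow]; exact eps_pow_p p)

lemma phi_tt : phi p (tt p) = eps p := by
  rw [phi, tt, AdjoinRoot.mk_X]
  simp

lemma sigma_eq_pow (g : Multiplicative (ZMod p)) :
    MonoidAlgebra.of (ZMod p) (Multiplicative (ZMod p)) g = sigma p ^ (g.toAdd).val := by
  haveI : NeZero p := ⟨(Fact.out (p := p.Prime)).ne_zero⟩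
  rw [sigma, ← map_pow, ← ofAdd_nsmul]
  congr 1
  rw [← ofAdd_toAdd g]
  congr 1
  simp [nsmul_eq_mul, ZMod.natCast_val, ZMod.cast_id]

lemma phi_surj : Function.Surjective (phi p) := by
  intro a
  induction a using MonoidAlgebra.induction_on with
  | of g =>
    refine ⟨(tt p + 1) ^ (g.toAdd).val, ?_⟩
    rw [map_pow, map_add, phi_tt, map_one, eps, sub_add_cancel, sigma_eq_pow]
  | add f g hf hg =>
    obtain ⟨a, rfl⟩ := hf; obtain ⟨b, rfl⟩ := hg; exact ⟨a + b, map_add _ _ _⟩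
  | smul r f hf =>
    obtain ⟨a, rfl⟩ := hf; exact ⟨r • a, map_smul _ _ _⟩

lemma phi_bij : Function.Bijective (phi p) := by
  haveI : FiniteDimensional (ZMod p) (Rp p) :=
    Module.Finite.of_basis (AdjoinRoot.powerBasis' (monic_X_pow p)).basis
  haveI : NeZero p := ⟨(Fact.out (p := p.Prime)).ne_zero⟩
  haveI : FiniteDimensional (ZMod p) (Sp p) :=
    Module.Finite.of_basis
      (MonoidAlgebra.basis _ _ : Module.Basis (Multiplicative (ZMod p)) (ZMod p) (Sp p))
  refine ⟨?_, phi_surj p⟩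
  have hr : Module.finrank (ZMod p) (Rp p) = Module.finrank (ZMod p) (Sp p) := by
    rw [sp_finrank]
    have := (AdjoinRoot.powerBasis' (monic_X_pow (R := ZMod p) p)).finrank
    simpa using this
  exact (LinearMap.injective_iff_surjective_of_finrank_eq_finrank
    (f := (phi p).toLinearMap) hr).mpr (phi_surj p)

noncomputable def eqv : Rp p ≃ₐ[ZMod p] Sp p := AlgEquiv.ofBijective (phi p) (phi_bij p)

lemma eqv_tt : eqv p (tt p) = eps p := phi_tt p

lemma K2S (k : ℕ) (hk : k ≤ p) (a : Sp p) (h : eps p ^ (p - k) * a = 0) :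
    ∃ b, a = eps p ^ k * b := by
  obtain ⟨b, rfl⟩ := (eqv p).surjective a
  have h2 : tt p ^ (p - k) * b = 0 := by
    apply (eqv p).injective
    rw [map_mul, map_pow, eqv_tt, map_zero]; exact h
  obtain ⟨c, rfl⟩ := Rp.K2 p k hk b h2
  exact ⟨eqv p c, by rw [map_mul, map_pow, eqv_tt]⟩

lemma K4S (a : Sp p) (ha : a ≠ 0) :
    ∃ k < p, ∃ u : Sp p, IsUnit u ∧ a = eps p ^ k * u := by
  obtain ⟨b, rfl⟩ := (eqv p).surjective a
  have hb : b ≠ 0 := fun h => ha (by rw [h, map_zero])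
  obtain ⟨k, hk, u, hu, rfl⟩ := Rp.K4 p b hb
  exact ⟨k, hk, eqv p u, hu.map (eqv p), by rw [map_mul, map_pow, eqv_tt]⟩

noncomputable def piS : Sp p → ZMod p := fun a => piR p ((eqv p).symm a)

lemma K6S (a : Sp p) : eps p ^ (p-1) * a = piS p a • eps p ^ (p-1) := by
  obtain ⟨b, rfl⟩ := (eqv p).surjective a
  have h2 := congrArg (eqv p) (Rp.K6 p b)
  rw [map_mul, map_pow, eqv_tt, map_smul, map_pow, eqv_tt] at h2
  rw [h2, piS, AlgEquiv.symm_apply_apply]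

lemma K7S (a : Sp p) (h : piS p a = 0) : ∃ c, a = eps p * c := by
  obtain ⟨b, rfl⟩ := (eqv p).surjective a
  rw [piS, AlgEquiv.symm_apply_apply] at h
  obtain ⟨c, rfl⟩ := Rp.K7 p b h
  exact ⟨eqv p c, by rw [map_mul, eqv_tt]⟩

lemma K3S (I : Ideal (Sp p)) : ∃ k ≤ p, I = Ideal.span {eps p ^ k} := by
  have hpS : eps p ^ p ∈ I := by rw [eps_pow_p]; exact I.zero_mem
  set S := {k | eps p ^ k ∈ I} with hS
  have hne : S.Nonempty := ⟨p, hpS⟩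
  have hkS : sInf S ∈ S := Nat.sInf_mem hne
  have hkp : sInf S ≤ p := Nat.sInf_le hpS
  refine ⟨sInf S, hkp, le_antisymm ?_ ?_⟩
  · intro a haI
    by_cases ha : a = 0
    · rw [ha]; exact (Ideal.span {eps p ^ sInf S}).zero_mem
    · obtain ⟨j, _, u, hu, rfl⟩ := K4S p a ha
      have hjI : eps p ^ j ∈ I := by
        obtain ⟨v, hv⟩ := hu.exists_right_inv
        have h7 := I.mul_mem_right v haI
        rwa [mul_assoc, hv, mul_one] at h7
      have hkj : sInf S ≤ j := Nat.sInf_le hjI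
      rw [Ideal.mem_span_singleton]
      exact Dvd.dvd.mul_right (pow_dvd_pow _ hkj) u
  · rw [Ideal.span_le, Set.singleton_subset_iff]; exact hkS

lemma free_P (N : Type*) [AddCommGroup N] [Module (Sp p) N] (hf : Module.Free (Sp p) N)
    (k : ℕ) (hk : k ≤ p) (m : N) (hm : eps p ^ (p - k) • m = 0) :
    ∃ y : N, m = eps p ^ k • y := by
  classical
  letI := hf
  let b := Module.Free.chooseBasis (Sp p) N
  have h1 : ∀ i, eps p ^ (p - k) * (b.repr m i) = 0 := by
    intro i
    have h2 : b.repr (eps p ^ (p-k) • m) = 0 := by rw [hm, map_zero]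
    calc eps p ^ (p-k) * b.repr m i = (eps p ^ (p-k) • b.repr m) i := by
          rw [Finsupp.smul_apply, smul_eq_mul]
    _ = 0 := by rw [← map_smul, h2]; rfl
  set g : Sp p → Sp p :=
    fun a => if a = 0 then 0 else if h : ∃ c, a = eps p ^ k * c then h.choose else 0 with hgdef
  have hg0 : g 0 = 0 := by simp [hgdef]
  have hg : ∀ a, (∃ c, a = eps p ^ k * c) → a = eps p ^ k * g a := by
    intro a h
    by_cases ha : a = 0
    · simp [hgdef, ha]
    · simp only [hgdef, ha, if_false, dif_pos h]; exact h.choose_spec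
  refine ⟨b.repr.symm (Finsupp.mapRange g hg0 (b.repr m)), ?_⟩
  apply b.repr.injective
  rw [map_smul, LinearEquiv.apply_symm_apply]
  refine Finsupp.ext fun i => ?_
  rw [Finsupp.smul_apply, Finsupp.mapRange_apply, smul_eq_mul]
  exact hg _ (K2S p k hk _ (h1 i))

lemma P_injective (N : Type*) [AddCommGroup N] [Module (Sp p) N]
    (hP : ∀ k ≤ p, ∀ m : N, eps p ^ (p - k) • m = 0 → ∃ y, m = eps p ^ k • y) :
    Module.Injective (Sp p) N := by
  refine Module.Baer.injective ?_
  intro I g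
  obtain ⟨k, hk, rfl⟩ := K3S p I
  have hmem : eps p ^ k ∈ Ideal.span {eps p ^ k} := Ideal.subset_span rfl
  set m := g ⟨eps p ^ k, hmem⟩ with hm
  have h0 : eps p ^ (p - k) • m = 0 := by
    rw [hm, ← map_smul]
    have h3 : (eps p ^ (p-k) • (⟨eps p ^ k, hmem⟩ : Ideal.span {eps p ^ k})) =
        (0 : Ideal.span {eps p ^ k}) := by
      apply Subtype.ext
      show eps p ^ (p-k) * eps p ^ k = 0
      rw [← pow_add, Nat.sub_add_cancel hk, eps_pow_p]
    rw [h3, map_zero]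
  obtain ⟨y, hy⟩ := hP k hk m h0
  refine ⟨LinearMap.toSpanSingleton (Sp p) N y, ?_⟩
  intro x hx
  obtain ⟨c, hc⟩ := Ideal.mem_span_singleton'.mp hx
  have h4 : (⟨x, hx⟩ : Ideal.span {eps p ^ k}) = c • (⟨eps p ^ k, hmem⟩ : Ideal.span {eps p ^ k}) :=
    Subtype.ext (by simp [smul_eq_mul, ← hc])
  rw [LinearMap.toSpanSingleton_apply, h4, map_smul, ← hm, hy, smul_smul, hc]

end Stmt5Aux


open Stmt5Aux in
/-- Every `𝔽_p[ℤ/pℤ]`-module contains a maximal free submodule `Y`, which is a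
direct summand. -/
theorem stmt5 (p : ℕ) [Fact p.Prime] (M : Type*) [AddCommGroup M] [Module (Sp p) M] :
    ∃ Y : Submodule (Sp p) M, Module.Free (Sp p) Y ∧
      (∀ Z : Submodule (Sp p) M, Module.Free (Sp p) Z → Y ≤ Z → Y = Z) ∧
      ∃ R : Submodule (Sp p) M, IsCompl Y R := by
  classical
  letI instM : Module (ZMod p) M := Module.compHom M (algebraMap (ZMod p) (Sp p))
  have hsm : ∀ (c : ZMod p) (x : M), c • x = (algebraMap (ZMod p) (Sp p) c) • x :=
    fun _ _ => rfl
  letI instT : IsScalarTower (ZMod p) (Sp p) M :=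
    ⟨fun c s x => by
      rw [Algebra.smul_def, mul_smul, hsm]⟩
  letI instC : SMulCommClass (ZMod p) (Sp p) M :=
    ⟨fun c s x => by
      rw [hsm c (s • x), hsm c x, smul_smul, smul_smul, mul_comm]⟩
  have hp1 : p - 1 + 1 = p := by have := (Fact.out (p := p.Prime)).pos; omega
  -- the 𝔽_p-subspace ε^{p-1} M
  let fZ : M →ₗ[ZMod p] M :=
    { toFun := fun x => eps p ^ (p-1) • x
      map_add' := fun x y => smul_add _ _ _
      map_smul' := fun c x => smul_comm _ _ _ }
  let V : Submodule (ZMod p) M := LinearMap.range fZ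
  let bV := Module.Basis.ofVectorSpace (ZMod p) V
  have hex : ∀ i, ∃ m : M, fZ m = (bV i : M) := fun i => LinearMap.mem_range.mp (bV i).2
  choose y hy using hex
  have hy' : ∀ i, eps p ^ (p-1) • y i = (bV i : M) := hy
  let Y : Submodule (Sp p) M := Submodule.span (Sp p) (Set.range y)
  have hyY : ∀ i, y i ∈ Y := fun i => Submodule.subset_span ⟨i, rfl⟩
  have hbVind : LinearIndependent (ZMod p) (fun i => (bV i : M)) :=
    bV.linearIndependent.map' V.subtype (Submodule.ker_subtype V)
  -- linear independence of the lifts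
  have hind : LinearIndependent (Sp p) y := by
    rw [linearIndependent_iff]
    intro l hl
    have key : ∀ n (i : _), eps p ^ n ∣ l i := by
      intro n
      induction n with
      | zero => intro i; rw [pow_zero]; exact one_dvd _
      | succ n ih =>
        by_cases hnp : p ≤ n
        · intro i
          obtain ⟨c, hc⟩ := ih i
          have hz : eps p ^ n = 0 := by
            calc eps p ^ n = eps p ^ p * eps p ^ (n - p) := by rw [← pow_add]; congr 1; omega
            _ = 0 := by rw [eps_pow_p, zero_mul]
          rw [hc, hz, zero_mul]
          exact dvd_zero _
        · push_neg at hnp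
          choose m hmm using ih
          have h2 : (l.support.sum fun i => eps p ^ (p-1-n) • (l i • y i)) = 0 := by
            rw [← Finset.smul_sum]
            rw [Finsupp.linearCombination_apply, Finsupp.sum] at hl
            rw [hl, smul_zero]
          have hterm : ∀ i ∈ l.support,
              eps p ^ (p-1-n) • (l i • y i) = piS p (m i) • ((bV i : M)) := by
            intro i _
            rw [smul_smul, hmm i, ← mul_assoc, ← pow_add]
            have he : p - 1 - n + n = p - 1 := by omega
            rw [he, K6S p (m i), smul_assoc, hy' i]
          rw [Finset.sum_congr rfl hterm] at h2
          have hzero := linearIndependent_iff'.mp hbVind l.support (fun i => piS p (m i)) h2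
          intro i
          by_cases hi : i ∈ l.support
          · obtain ⟨c, hc⟩ := K7S p (m i) (hzero i hi)
            exact ⟨c, by rw [hmm i, hc, pow_succ, mul_assoc]⟩
          · rw [Finsupp.notMem_support_iff.mp hi]
            exact dvd_zero _
    ext i
    obtain ⟨c, hc⟩ := key p i
    rw [hc, eps_pow_p, zero_mul]
    rfl
  have freeY : Module.Free (Sp p) Y := Module.Free.of_basis (Module.Basis.span hind)
  -- every element of V is ε^{p-1} • (element of Y)
  have hVY : ∀ v : M, v ∈ V → ∃ u ∈ Y, eps p ^ (p-1) • u = v := by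
    intro v hv
    have hrepr := bV.linearCombination_repr ⟨v, hv⟩
    set c := bV.repr ⟨v, hv⟩ with hcdef
    refine ⟨c.sum fun i r => r • y i, ?_, ?_⟩
    · apply Submodule.sum_mem
      intro i _
      show c i • y i ∈ Y
      rw [hsm]
      exact Submodule.smul_mem _ _ (hyY i)
    · rw [Finsupp.sum, Finset.smul_sum]
      have hterm : ∀ i ∈ c.support, eps p ^ (p-1) • (c i • y i) = c i • (bV i : M) := by
        intro i _
        rw [smul_comm, hy']
      rw [Finset.sum_congr rfl hterm]
      have hco : ((∑ a ∈ c.support, c a • bV a : V) : M) = v := by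
        have h9 := congrArg (Subtype.val) hrepr
        rw [Finsupp.linearCombination_apply, Finsupp.sum] at h9
        exact h9
      rw [← hco]
      simp [AddSubmonoidClass.coe_finset_sum]
  -- maximality
  have hmax : ∀ Z : Submodule (Sp p) M, Module.Free (Sp p) Z → Y ≤ Z → Y = Z := by
    intro Z hZfree hYZ
    refine le_antisymm hYZ ?_
    have hQ : ∀ k, k ≤ p → ∀ m ∈ Z, eps p ^ k • m = 0 → m ∈ Y := by
      intro k
      induction k with
      | zero =>
        intro _ m _ h0
        rw [pow_zero, one_smul] at h0
        rw [h0]; exact Y.zero_mem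
      | succ k ih =>
        intro hk1 m hmZ h0
        have hsub : eps p ^ (p - (p-1)) • ((⟨eps p ^ k • m, Z.smul_mem _ hmZ⟩ : Z)) = 0 := by
          apply Subtype.ext
          have hpp : p - (p-1) = 1 := by omega
          show eps p ^ (p - (p-1)) • (eps p ^ k • m) = 0
          rw [hpp, pow_one, smul_smul, ← pow_succ', h0]
        obtain ⟨w, hw⟩ := free_P p Z hZfree (p-1) (Nat.sub_le p 1) _ hsub
        have hw' : eps p ^ k • m = eps p ^ (p-1) • (w : M) := by
          have := congrArg (Subtype.val) hw
          simpa using this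
        have hVmem : eps p ^ (p-1) • (w : M) ∈ V := ⟨(w : M), rfl⟩
        obtain ⟨u, huY, hu⟩ := hVY _ hVmem
        have heq : eps p ^ k • (m - eps p ^ (p-1-k) • u) = 0 := by
          rw [smul_sub, hw', smul_smul, ← pow_add]
          have he : k + (p-1-k) = p-1 := by omega
          rw [he, hu, sub_self]
        have hmem2 : m - eps p ^ (p-1-k) • u ∈ Z := Z.sub_mem hmZ (Z.smul_mem _ (hYZ huY))
        have hY2 := ih (by omega) _ hmem2 heq
        have h8 := Y.add_mem hY2 (Y.smul_mem (eps p ^ (p-1-k)) huY)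
        rwa [sub_add_cancel] at h8
    intro m hmZ
    exact hQ p le_rfl m hmZ (by rw [eps_pow_p, zero_smul])
  -- complement via injectivity
  have hinj : Module.Injective (Sp p) Y :=
    P_injective p Y (fun k hk => free_P p Y freeY k hk)
  obtain ⟨h, hh⟩ := hinj.out Y.subtype (Submodule.injective_subtype Y) LinearMap.id
  exact ⟨Y, freeY, hmax, LinearMap.ker h, LinearMap.isCompl_of_proj hh⟩
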